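/- Let A ∈ ℂ^{n×n}, u, v ∈ ℂ^n, with minimal polynomial m of degree l, and suppose p_{uv}(λ) = m(λ)vᵀ(λI−A)⁻¹u has degree l−1 and no common roots with m. If there exists τ₀ > 0 such that for all τ with |τ| > τ₀ all roots of m − τp_{uv} are simple, then there are at most 2l−2 values of τ ∈ ℂ for which A + τuvᵀ has an eigenvalue of algebraic multiplicity at least two that is not an eigenvalue of A. -/

import Mathlib

open Matrix Polynomial

private lemma eval_charpoly_det {N : Type*} [DecidableEq N] [Fintype N]
    (M : Matrix N N ℂ) (z : ℂ) :
    M.charpoly.eval z = (z • (1 : Matrix N N ℂ) - M).det := by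
  rw [Matrix.charpoly, ← coe_evalRingHom, RingHom.map_det]
  congr 1
  ext i j
  by_cases h : i = j <;>
    simp [h, charmatrix_apply, Matrix.one_apply, Matrix.smul_apply, Matrix.sub_apply,
      Matrix.diagonal_apply]

private lemma mul_vecMulVec' {N : Type*} [Fintype N] (M : Matrix N N ℂ) (u v : N → ℂ) :
    M * Matrix.vecMulVec u v = Matrix.vecMulVec (M *ᵥ u) v := by
  ext i j
  simp [Matrix.mul_apply, Matrix.vecMulVec_apply, Matrix.mulVec, dotProduct,
    Finset.sum_mul, mul_assoc]

private lemma charpoly_eval_rank_one (n : ℕ) (A : Matrix (Fin n) (Fin n) ℂ)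
    (u v : Fin n → ℂ) (τ : ℂ) (z : ℂ) (hz : z ∉ spectrum ℂ A) :
    (A + τ • Matrix.vecMulVec u v).charpoly.eval z =
      A.charpoly.eval z *
        (1 - τ * (v ⬝ᵥ ((z • (1 : Matrix (Fin n) (Fin n) ℂ) - A)⁻¹ *ᵥ u))) := by
  have hB : IsUnit (z • (1 : Matrix (Fin n) (Fin n) ℂ) - A) := by
    rw [← Algebra.algebraMap_eq_smul_one]
    exact spectrum.notMem_iff.mp hz
  set B := z • (1 : Matrix (Fin n) (Fin n) ℂ) - A with hBdef
  have hBd : IsUnit B.det := (Matrix.isUnit_iff_isUnit_det B).mp hB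
  have h1 : z • (1 : Matrix (Fin n) (Fin n) ℂ) - (A + τ • Matrix.vecMulVec u v)
      = B * (1 + Matrix.vecMulVec ((-τ) • (B⁻¹ *ᵥ u)) v) := by
    rw [Matrix.mul_add, Matrix.mul_one]
    have : Matrix.vecMulVec ((-τ) • (B⁻¹ *ᵥ u)) v = (-τ) • Matrix.vecMulVec (B⁻¹ *ᵥ u) v := by
      ext i j; simp [Matrix.vecMulVec_apply, mul_assoc]
    rw [this, ← mul_vecMulVec', Matrix.mul_smul, ← Matrix.mul_assoc,
      Matrix.mul_nonsing_inv B hBd, Matrix.one_mul]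
    module
  rw [eval_charpoly_det, eval_charpoly_det, h1, Matrix.det_mul]
  congr 1
  rw [show (1 : Matrix (Fin n) (Fin n) ℂ) + Matrix.vecMulVec ((-τ) • (B⁻¹ *ᵥ u)) v
      = 1 + Matrix.replicateCol Unit ((-τ) • (B⁻¹ *ᵥ u)) * Matrix.replicateRow Unit v from by
        rw [Matrix.vecMulVec_eq Unit], Matrix.det_one_add_replicateCol_mul_replicateRow]
  simp [dotProduct_smul, mul_comm]
  ring

/-- If p_{uv} has degree l-1 (l = deg of the minimal polynomial m of A), no common root
with m, and for all large |τ| all roots of m - τ p_{uv} are simple, then there are at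
most 2l - 2 values of τ ∈ ℂ for which A + τ u vᵀ has an eigenvalue of algebraic
multiplicity at least two that is not an eigenvalue of A. -/
theorem stmt_19 (n : ℕ) (A : Matrix (Fin n) (Fin n) ℂ) (u v : Fin n → ℂ)
    (p : Polynomial ℂ)
    (hp : ∀ z : ℂ, z ∉ spectrum ℂ A →
      p.eval z = (minpoly ℂ A).eval z *
        (v ⬝ᵥ ((z • (1 : Matrix (Fin n) (Fin n) ℂ) - A)⁻¹ *ᵥ u)))
    (hpdeg : p.natDegree = (minpoly ℂ A).natDegree - 1)
    (hcommon : ∀ z : ℂ, ¬(p.IsRoot z ∧ (minpoly ℂ A).IsRoot z))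
    (hτ₀ : ∃ τ₀ > (0 : ℝ), ∀ τ : ℂ, τ₀ < ‖τ‖ →
      ((minpoly ℂ A - C τ * p).roots).Nodup) :
    {τ : ℂ | ∃ z : ℂ, z ∉ spectrum ℂ A ∧
        2 ≤ Polynomial.rootMultiplicity z
          ((A + τ • Matrix.vecMulVec u v).charpoly)}.Finite ∧
      {τ : ℂ | ∃ z : ℂ, z ∉ spectrum ℂ A ∧
          2 ≤ Polynomial.rootMultiplicity z
            ((A + τ • Matrix.vecMulVec u v).charpoly)}.ncard ≤
        2 * (minpoly ℂ A).natDegree - 2 := by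
  classical
  set m : ℂ[X] := minpoly ℂ A with hmdef
  set S := {τ : ℂ | ∃ z : ℂ, z ∉ spectrum ℂ A ∧
      2 ≤ Polynomial.rootMultiplicity z
        ((A + τ • Matrix.vecMulVec u v).charpoly)} with hSdef
  rcases Nat.eq_zero_or_pos n with hn | hn
  · -- degenerate case n = 0 : the charpoly is 1, so S is empty
    subst hn
    have hS : S = ∅ := by
      ext τ
      simp only [hSdef, Set.mem_setOf_eq, Set.mem_empty_iff_false, iff_false, not_exists]
      rintro z ⟨hz, h2⟩
      have h1 : (A + τ • Matrix.vecMulVec u v).charpoly = 1 := by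
        rw [Matrix.charpoly, Matrix.det_isEmpty]
      rw [h1, Polynomial.rootMultiplicity_eq_zero (by simp [Polynomial.IsRoot])] at h2
      omega
    rw [hS]
    simp
  -- main case
  have hNZ : NeZero n := ⟨hn.ne'⟩
  have hint : IsIntegral ℂ A := Matrix.isIntegral A
  have hmonic : m.Monic := minpoly.monic hint
  have hm0 : m ≠ 0 := hmonic.ne_zero
  have hl : 0 < m.natDegree := minpoly.natDegree_pos hint
  set l := m.natDegree with hldef
  -- the key polynomial identity
  have key : ∀ τ : ℂ, (A + τ • Matrix.vecMulVec u v).charpoly * m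
      = A.charpoly * (m - C τ * p) := by
    intro τ
    apply eq_of_infinite_eval_eq
    have hspec : (spectrum ℂ A).Finite := by
      apply Set.Finite.subset (A.charpoly.roots.toFinset : Finset ℂ).finite_toSet
      intro z hz
      have hz' : ¬IsUnit (z • (1 : Matrix (Fin n) (Fin n) ℂ) - A) := by
        rw [← Algebra.algebraMap_eq_smul_one]
        exact fun h => (spectrum.notMem_iff.mpr h) hz
      have hdet : (z • (1 : Matrix (Fin n) (Fin n) ℂ) - A).det = 0 := by
        by_contra hd
        exact hz' ((Matrix.isUnit_iff_isUnit_det _).mpr (isUnit_iff_ne_zero.mpr hd))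
      simp only [Finset.mem_coe, Multiset.mem_toFinset]
      rw [Polynomial.mem_roots (A.charpoly_monic.ne_zero)]
      show A.charpoly.eval z = 0
      rw [eval_charpoly_det]
      exact hdet
    apply Set.Infinite.mono (s := (spectrum ℂ A)ᶜ)
    · intro z hz
      have hz : z ∉ spectrum ℂ A := hz
      have hB : IsUnit (z • (1 : Matrix (Fin n) (Fin n) ℂ) - A) := by
        rw [← Algebra.algebraMap_eq_smul_one]
        exact spectrum.notMem_iff.mp hz
      simp only [Set.mem_setOf_eq, eval_mul, eval_sub, eval_C]
      rw [charpoly_eval_rank_one n A u v τ z hz]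
      rw [hp z hz]
      ring
    · exact hspec.infinite_compl
  -- basic nonvanishing facts outside the spectrum
  have hchA : ∀ z : ℂ, z ∉ spectrum ℂ A → A.charpoly.eval z ≠ 0 := by
    intro z hz
    have hB : IsUnit (z • (1 : Matrix (Fin n) (Fin n) ℂ) - A) := by
      rw [← Algebra.algebraMap_eq_smul_one]
      exact spectrum.notMem_iff.mp hz
    rw [eval_charpoly_det]
    exact isUnit_iff_ne_zero.mp ((Matrix.isUnit_iff_isUnit_det _).mp hB)
  have hmne : ∀ z : ℂ, z ∉ spectrum ℂ A → m.eval z ≠ 0 := by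
    intro z hz hzero
    obtain ⟨c, hc⟩ := Matrix.minpoly_dvd_charpoly A
    apply hchA z hz
    rw [hc, eval_mul, ← hmdef, hzero, zero_mul]
  -- the Wronskian
  set W : ℂ[X] := m * derivative p - derivative m * p with hWdef
  have hWne : W ≠ 0 := by
    intro hW
    have hcop : IsCoprime m p := by
      rw [← EuclideanDomain.gcd_isUnit_iff]
      by_contra hg
      have hgm : EuclideanDomain.gcd m p ∣ m := EuclideanDomain.gcd_dvd_left m p
      have hgp : EuclideanDomain.gcd m p ∣ p := EuclideanDomain.gcd_dvd_right m p
      have hgne : EuclideanDomain.gcd m p ≠ 0 := fun h =>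
        hm0 (by simpa [h] using hgm)
      obtain ⟨z, hzroot⟩ := Complex.exists_root
        (Polynomial.degree_pos_of_ne_zero_of_nonunit hgne hg)
      exact hcommon z ⟨hzroot.dvd hgp, hzroot.dvd hgm⟩
    have hdvd : m ∣ derivative m * p := ⟨derivative p, by linear_combination -hW⟩
    have hdvd' : m ∣ derivative m := by
      rw [mul_comm] at hdvd
      exact hcop.dvd_of_dvd_mul_left hdvd
    have hd0 : derivative m = 0 :=
      Polynomial.eq_zero_of_dvd_of_degree_lt hdvd' (Polynomial.degree_derivative_lt hm0)
    have := Polynomial.natDegree_eq_zero_of_derivative_eq_zero hd0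
    omega
  have hWdeg : W.natDegree ≤ 2 * l - 2 := by
    apply (Polynomial.natDegree_sub_le _ _).trans
    apply max_le
    · -- m * p'
      rcases Nat.eq_or_lt_of_le hl with h1 | h2
      · -- l = 1 : p is constant, so derivative p = 0
        have hp0 : p.natDegree = 0 := by omega
        obtain ⟨c, hc⟩ := Polynomial.natDegree_eq_zero.mp hp0
        subst hc
        simp
      · apply (Polynomial.natDegree_mul_le).trans
        have := Polynomial.natDegree_derivative_le p
        omega
    · apply (Polynomial.natDegree_mul_le).trans
      have := Polynomial.natDegree_derivative_le m
      omega
  -- the inclusion of the bad set into the image of the roots of W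
  have hsub : S ⊆ (fun z => m.eval z / p.eval z) '' (W.roots.toFinset : Set ℂ) := by
    rintro τ ⟨z, hz, h2⟩
    set q : ℂ[X] := m - C τ * p with hqdef
    have hchm : (A + τ • Matrix.vecMulVec u v).charpoly.Monic := Matrix.charpoly_monic _
    have hne : (A + τ • Matrix.vecMulVec u v).charpoly * m ≠ 0 := mul_ne_zero hchm.ne_zero hm0
    have hne' : A.charpoly * q ≠ 0 := by rw [← key τ]; exact hne
    have hq0 : q ≠ 0 := fun h => hne' (by rw [h, mul_zero])
    have hrm : 2 ≤ q.rootMultiplicity z := by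
      have e1 : rootMultiplicity z ((A + τ • Matrix.vecMulVec u v).charpoly * m)
          = rootMultiplicity z (A.charpoly * q) := by rw [key τ]
      rw [Polynomial.rootMultiplicity_mul hne, Polynomial.rootMultiplicity_mul hne'] at e1
      rw [Polynomial.rootMultiplicity_eq_zero (by exact hmne z hz : ¬m.IsRoot z)] at e1
      rw [Polynomial.rootMultiplicity_eq_zero (by exact hchA z hz : ¬A.charpoly.IsRoot z)] at e1
      omega
    obtain ⟨hr1, hr2⟩ := (Polynomial.one_lt_rootMultiplicity_iff_isRoot hq0).mp hrm
    have e1 : m.eval z = τ * p.eval z := by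
      have := hr1
      simp only [hqdef, Polynomial.IsRoot, eval_sub, eval_mul, eval_C] at this
      linear_combination this
    have e2 : (derivative m).eval z = τ * (derivative p).eval z := by
      have := hr2
      simp only [hqdef, derivative_sub, derivative_C_mul, Polynomial.IsRoot,
        eval_sub, eval_mul, eval_C] at this
      linear_combination this
    have hpz : p.eval z ≠ 0 := by
      intro h0
      exact hcommon z ⟨h0, by rw [Polynomial.IsRoot, e1, h0, mul_zero]⟩
    refine ⟨z, ?_, ?_⟩
    · simp only [Finset.coe_sort_coe, Multiset.mem_toFinset, Finset.mem_coe]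
      rw [Polynomial.mem_roots hWne]
      show W.eval z = 0
      rw [hWdef]
      simp only [eval_sub, eval_mul]
      rw [e1, e2]
      ring
    · show m.eval z / p.eval z = τ
      rw [e1, mul_div_assoc, div_self hpz, mul_one]
  -- conclude
  have hfin : ((fun z => m.eval z / p.eval z) '' (W.roots.toFinset : Set ℂ)).Finite :=
    (W.roots.toFinset.finite_toSet).image _
  constructor
  · exact hfin.subset hsub
  · calc S.ncard ≤ ((fun z => m.eval z / p.eval z) '' (W.roots.toFinset : Set ℂ)).ncard :=
          Set.ncard_le_ncard hsub hfin
      _ ≤ ((W.roots.toFinset : Set ℂ)).ncard := Set.ncard_image_le (W.roots.toFinset.finite_toSet)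
      _ = W.roots.toFinset.card := Set.ncard_coe_finset _
      _ ≤ Multiset.card W.roots := W.roots.toFinset_card_le
      _ ≤ W.natDegree := Polynomial.card_roots' W
      _ ≤ 2 * l - 2 := hWdeg
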